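/- arXiv:2509.24158 — 5 statements merged into one kernel-verified Lean document; each statement's English description precedes it below -/
import Mathlib

section
/- Under the setup of the RAY decomposition with operators A_r satisfying A_r ∘ A_{r'} = A_{r'} for r' ⊆ r and A_M = id, the identity ℳ(f) = ∑_{s ⊆ M} λ_s P_s(f) holds for all f; equivalently, the remainder terms sum to zero: ∑_{s ⊆ M} Rem_s(f) = 0. -/
open Finset

lemma ray_sign_sum {α : Type*} [DecidableEq α] (r t : Finset α) :
    ∑ s ∈ t.powerset.filter (fun s => r ⊆ s), (-1:ℝ)^(s.card - r.card)
      = if t = r ∧ r ⊆ t then 1 else 0 := by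
  by_cases hrt : r ⊆ t
  · rw [Finset.sum_bij' (t := (t \ r).powerset) (g := fun u => (-1:ℝ)^u.card)
      (fun s _ => s \ r) (fun u _ => u ∪ r) ?_ ?_ ?_ ?_ ?_]
    · have h := Finset.sum_powerset_neg_one_pow_card (x := t \ r)
      have h2 : ∑ x ∈ (t \ r).powerset, (-1:ℝ)^x.card
          = ((∑ m ∈ (t \ r).powerset, (-1:ℤ)^m.card : ℤ) : ℝ) := by
        push_cast; rfl
      rw [h2, h]
      simp only [sdiff_eq_empty_iff_subset]
      by_cases h3 : t ⊆ r
      · simp [h3, subset_antisymm h3 hrt, hrt]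
      · have h4 : ¬(t = r ∧ r ⊆ t) := fun hh => h3 (le_of_eq hh.1)
        simp [h3, h4]
    · intro s hs
      simp only [mem_filter, mem_powerset] at hs
      simp only [mem_powerset]
      exact sdiff_subset_sdiff hs.1 (Finset.Subset.refl _)
    · intro u hu
      simp only [mem_powerset] at hu
      simp only [mem_filter, mem_powerset]
      exact ⟨union_subset (hu.trans (sdiff_subset)) hrt, subset_union_right⟩
    · intro s hs
      simp only [mem_filter, mem_powerset] at hs
      exact sdiff_union_of_subset hs.2
    · intro u hu
      simp only [mem_powerset] at hu
      have : Disjoint u r := disjoint_of_subset_left hu sdiff_disjoint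
      exact union_sdiff_cancel_right this
    · intro s hs
      simp only [mem_filter, mem_powerset] at hs
      show (-1:ℝ)^(s.card - r.card) = (-1:ℝ)^((s \ r).card)
      rw [card_sdiff_of_subset hs.2]
  · have : t.powerset.filter (fun s => r ⊆ s) = ∅ := by
      ext s; simp only [mem_filter, mem_powerset, notMem_empty, iff_false]
      rintro ⟨h1, h2⟩; exact hrt (h2.trans h1)
    rw [this]
    simp [hrt]

/-- The RAY remainder terms sum to zero: `ℳ(f) = ∑_{s ⊆ M} λ_s P_s(f)`, i.e.
`∑_{s ⊆ M} Rem_s(f) = 0`. -/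
theorem ray_remainders_sum_to_zero {α : Type*} [DecidableEq α] {V : Type*}
    [AddCommGroup V] [Module ℝ V]
    (M : Finset α) (Q : Finset (Finset α)) (hQM : M ∈ Q)
    (hQsub : ∀ r ∈ Q, r ⊆ M)
    (A : Finset α → V →ₗ[ℝ] V) (hAM : A M = LinearMap.id)
    (htower : ∀ r r' : Finset α, r' ⊆ r → (A r).comp (A r') = A r')
    (π : Finset α → ℝ)
    (lam : Finset α → ℝ)
    (hlam : ∀ s, lam s = ∑ t ∈ Q.filter (fun t => s ⊆ t), π t)
    (P : Finset α → V → V)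
    (hP : ∀ s f, P s f = ∑ r ∈ Q.filter (fun r => r ⊆ s),
      ((-1 : ℝ) ^ (s.card - r.card)) • A r f)
    (Rem : Finset α → V → V)
    (hRem : ∀ s f, Rem s f = (∑ r ∈ Q, π r • A r (P s f)) - lam s • P s f) :
    ∀ f : V,
      (∑ r ∈ Q, π r • A r f = ∑ s ∈ M.powerset, lam s • P s f) ∧
      (∑ s ∈ M.powerset, Rem s f = 0) := by
  intro f
  -- filter in powerset of M by ⊆ t equals powerset of t
  have hpow : ∀ t ∈ Q, M.powerset.filter (fun s => s ⊆ t) = t.powerset := by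
    intro t ht
    ext s
    simp only [mem_filter, mem_powerset]
    exact ⟨fun h => h.2, fun h => ⟨h.trans (hQsub t ht), h⟩⟩
  have key1 : ∑ s ∈ M.powerset, lam s • P s f = ∑ r ∈ Q, π r • A r f := by
    calc ∑ s ∈ M.powerset, lam s • P s f
        = ∑ s ∈ M.powerset, ∑ t ∈ Q, ∑ r ∈ Q,
            (if s ⊆ t then (if r ⊆ s then (π t * (-1:ℝ)^(s.card - r.card)) • A r f else 0) else 0) := by
          refine Finset.sum_congr rfl fun s _ => ?_
          rw [hlam, hP, Finset.sum_smul]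
          rw [Finset.sum_filter]
          refine Finset.sum_congr rfl fun t _ => ?_
          split_ifs with h
          · rw [Finset.smul_sum, Finset.sum_filter]
            refine Finset.sum_congr rfl fun r _ => ?_
            split_ifs with h2
            · rw [smul_smul]
            · rfl
          · rw [Finset.sum_eq_zero]; intro r _; rfl
      _ = ∑ t ∈ Q, ∑ r ∈ Q, ∑ s ∈ M.powerset,
            (if s ⊆ t then (if r ⊆ s then (π t * (-1:ℝ)^(s.card - r.card)) • A r f else 0) else 0) := by
          rw [Finset.sum_comm]
          exact Finset.sum_congr rfl fun t _ => Finset.sum_comm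
      _ = ∑ t ∈ Q, ∑ r ∈ Q, (if t = r ∧ r ⊆ t then (1:ℝ) else 0) • (π t • A r f) := by
          refine Finset.sum_congr rfl fun t ht => Finset.sum_congr rfl fun r hr => ?_
          rw [← Finset.sum_filter, hpow t ht]
          have h1 : (∑ s ∈ t.powerset,
              (if r ⊆ s then (π t * (-1:ℝ)^(s.card - r.card)) • A r f else 0))
              = ∑ s ∈ t.powerset,
                (if r ⊆ s then (-1:ℝ)^(s.card - r.card) else 0) • (π t • A r f) := by
            refine Finset.sum_congr rfl fun s _ => ?_
            split_ifs
            · rw [smul_smul, mul_comm]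
            · exact (zero_smul ℝ _).symm
          rw [h1, ← Finset.sum_smul, ← Finset.sum_filter, ray_sign_sum]
      _ = ∑ r ∈ Q, π r • A r f := by
          rw [Finset.sum_comm]
          refine Finset.sum_congr rfl fun r hr => ?_
          rw [Finset.sum_eq_single r]
          · simp
          · intro t _ hne
            have : ¬(t = r ∧ r ⊆ t) := fun h => hne h.1
            simp [this]
          · intro h; exact absurd hr h
  have key2 : ∑ s ∈ M.powerset, P s f = f := by
    calc ∑ s ∈ M.powerset, P s f
        = ∑ s ∈ M.powerset, ∑ r ∈ Q,
            (if r ⊆ s then ((-1:ℝ)^(s.card - r.card)) • A r f else 0) := by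
          refine Finset.sum_congr rfl fun s _ => ?_
          rw [hP, Finset.sum_filter]
      _ = ∑ r ∈ Q, ∑ s ∈ M.powerset,
            (if r ⊆ s then ((-1:ℝ)^(s.card - r.card)) • A r f else 0) := Finset.sum_comm
      _ = ∑ r ∈ Q, (if M = r ∧ r ⊆ M then (1:ℝ) else 0) • A r f := by
          refine Finset.sum_congr rfl fun r hr => ?_
          have h1 : (∑ s ∈ M.powerset,
              (if r ⊆ s then ((-1:ℝ)^(s.card - r.card)) • A r f else 0))
              = ∑ s ∈ M.powerset,
                (if r ⊆ s then (-1:ℝ)^(s.card - r.card) else 0) • A r f := by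
            refine Finset.sum_congr rfl fun s _ => ?_
            split_ifs
            · rfl
            · exact (zero_smul ℝ _).symm
          rw [h1, ← Finset.sum_smul, ← Finset.sum_filter, ray_sign_sum]
      _ = f := by
          rw [Finset.sum_eq_single M]
          · simp [hAM]
          · intro t _ hne
            have : ¬(M = t ∧ t ⊆ M) := fun h => hne h.1.symm
            simp [this]
          · intro h; exact absurd hQM h
  refine ⟨key1.symm, ?_⟩
  have : ∑ s ∈ M.powerset, Rem s f
      = (∑ s ∈ M.powerset, ∑ r ∈ Q, π r • A r (P s f)) - ∑ s ∈ M.powerset, lam s • P s f := by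
    rw [← Finset.sum_sub_distrib]
    exact Finset.sum_congr rfl fun s _ => hRem s f
  rw [this, key1, Finset.sum_comm]
  have : ∀ r ∈ Q, ∑ s ∈ M.powerset, π r • A r (P s f) = π r • A r f := by
    intro r _
    rw [← Finset.smul_sum, ← map_sum, key2]
  rw [Finset.sum_congr rfl this, sub_self]
end

section
/- Let Z be an integrable random variable (or vector) with E[ψ] = 0, and let R be a random pattern independent of Z taking values in a finite set Q with P(R = r) = π_r > 0. Then the prediction-powered-type estimating function Ψ = (𝟙(R = M)/π_M)·ψ + ∑_{r ≠ M} α_r ω_r 𝓕_r, where ω_r is any function of R with E[ω_r] = 0, 𝓕_r is any integrable function of Z, and α_r ∈ ℝ, satisfies E[Ψ] = 0. -/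
open MeasureTheory Finset

/-- Validity of the IBM estimating function: with the pattern `R` independent of the
data (modeled by a product space), `E[ψ] = 0`, and pattern weights `ω_r` with mean
zero, the estimating function
`Ψ = 𝟙(R = M)/π_M · ψ + ∑_{r ≠ M} α_r ω_r(R) 𝓕_r` has mean zero for any `α` and any
integrable `𝓕_r`. -/
theorem ibm_estimating_function_unbiased
    {Ω : Type*} [MeasurableSpace Ω] (μ : Measure Ω) [IsProbabilityMeasure μ]
    {ι : Type*} [Fintype ι] [DecidableEq ι] [MeasurableSpace ι]
    [MeasurableSingletonClass ι]
    (ν : Measure ι) [IsProbabilityMeasure ν]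
    (Q : Finset ι) (M : ι) (hM : M ∈ Q)
    (hν : ∀ t, t ∉ Q → ν {t} = 0)
    (π : ι → ℝ) (hπ : ∀ t ∈ Q, π t = (ν {t}).toReal) (hpos : ∀ t ∈ Q, 0 < π t)
    (ψ : Ω → ℝ) (hψint : Integrable ψ μ) (hψ : ∫ z, ψ z ∂μ = 0)
    (F : ι → Ω → ℝ) (hF : ∀ r ∈ Q.erase M, Integrable (F r) μ)
    (w : ι → ι → ℝ) (hw : ∀ r ∈ Q.erase M, ∫ t, w r t ∂ν = 0)
    (α : ι → ℝ) :
    ∫ p : Ω × ι,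
      ((if p.2 = M then 1 / π M else 0) * ψ p.1 +
        ∑ r ∈ Q.erase M, α r * w r p.2 * F r p.1) ∂(μ.prod ν) = 0 := by
  have hg1 : Integrable (fun t : ι => if t = M then 1 / π M else 0) ν :=
    .of_finite
  have hint1 : Integrable
      (fun p : Ω × ι => (if p.2 = M then 1 / π M else 0) * ψ p.1) (μ.prod ν) := by
    have := hψint.mul_prod hg1
    exact this.congr (Filter.Eventually.of_forall fun p => mul_comm _ _)
  have hintr : ∀ r ∈ Q.erase M,
      Integrable (fun p : Ω × ι => α r * w r p.2 * F r p.1) (μ.prod ν) := by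
    intro r hr
    have hwint : Integrable (fun t : ι => α r * w r t) ν := .of_finite
    have := (hF r hr).mul_prod hwint
    exact this.congr (Filter.Eventually.of_forall fun p => by ring)
  have hintsum : Integrable
      (fun p : Ω × ι => ∑ r ∈ Q.erase M, α r * w r p.2 * F r p.1) (μ.prod ν) :=
    integrable_finset_sum _ hintr
  rw [integral_add hint1 hintsum, integral_finset_sum _ hintr]
  have h1 : ∫ p : Ω × ι, (if p.2 = M then 1 / π M else 0) * ψ p.1 ∂(μ.prod ν) = 0 := by
    have : ∫ p : Ω × ι, ψ p.1 * (if p.2 = M then 1 / π M else 0) ∂(μ.prod ν)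
        = (∫ z, ψ z ∂μ) * ∫ t, (if t = M then 1 / π M else 0) ∂ν :=
      integral_prod_mul ψ (fun t : ι => if t = M then 1 / π M else 0)
    rw [hψ, zero_mul] at this
    have heq : ∫ p : Ω × ι, (if p.2 = M then 1 / π M else 0) * ψ p.1 ∂(μ.prod ν)
        = ∫ p : Ω × ι, ψ p.1 * (if p.2 = M then 1 / π M else 0) ∂(μ.prod ν) :=
      integral_congr_ae (Filter.Eventually.of_forall fun p => mul_comm _ _)
    rw [heq, this]
  have h2 : ∀ r ∈ Q.erase M,
      ∫ p : Ω × ι, α r * w r p.2 * F r p.1 ∂(μ.prod ν) = 0 := by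
    intro r hr
    have : ∫ p : Ω × ι, F r p.1 * (α r * w r p.2) ∂(μ.prod ν)
        = (∫ z, F r z ∂μ) * ∫ t, α r * w r t ∂ν := integral_prod_mul (F r) (fun t => α r * w r t)
    rw [integral_const_mul, hw r hr, mul_zero, mul_zero] at this
    have heq : ∫ p : Ω × ι, α r * w r p.2 * F r p.1 ∂(μ.prod ν)
        = ∫ p : Ω × ι, F r p.1 * (α r * w r p.2) ∂(μ.prod ν) :=
      integral_congr_ae (Filter.Eventually.of_forall fun p => by ring)
    rw [heq, this]
  rw [h1, Finset.sum_congr rfl h2, Finset.sum_const, smul_zero, zero_add]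
end

section
/- Let Q be a finite collection of subsets of M with M ∈ Q and all π_t > 0, λ_s = ∑_{t∈Q, t⊇s} π_t. Fix r ∈ Q, r ≠ M, and define the RAY random variable ω_r(R) = ∑_{s ⊇ r}(-1)^{|s|-|r|} 𝟙(R ⊇ s)/λ_s. Then ω_r can be rewritten as ω_r = ∑_{s ∈ Q, s ⊇ r} (𝟙(R = s)/π_s) · α_{r,s} with coefficients α_{r,s} = π_s · ∑_{t : r ⊆ t ⊆ s} (-1)^{|t|-|r|}/λ_t, and these coefficients satisfy the constraint ∑_{s ∈ Q, s ⊇ r} α_{r,s} = 0. -/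
open Finset

/-- IBM(RAY) belongs to the adaptive class: the RAY random variable
`ω_r(R) = ∑_{s ⊇ r} (-1)^{|s|-|r|} 𝟙(s ⊆ R)/λ_s` can be rewritten as
`∑_{s ∈ Q, s ⊇ r} (𝟙(R = s)/π_s)·α_{r,s}` with
`α_{r,s} = π_s ∑_{t : r ⊆ t ⊆ s} (-1)^{|t|-|r|}/λ_t`, and these coefficients
satisfy the constraint `∑_{s ∈ Q, s ⊇ r} α_{r,s} = 0`. -/
theorem ray_in_adaptive_class {α : Type*} [DecidableEq α]
    (M : Finset α) (Q : Finset (Finset α)) (hQM : M ∈ Q)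
    (hQsub : ∀ t ∈ Q, t ⊆ M)
    (π : Finset α → ℝ) (hpos : ∀ t ∈ Q, 0 < π t)
    (lam : Finset α → ℝ)
    (hlam : ∀ s, lam s = ∑ t ∈ Q.filter (fun t => s ⊆ t), π t)
    (hlampos : ∀ s ⊆ M, 0 < lam s)
    (r : Finset α) (hr : r ∈ Q) (hrM : r ≠ M)
    (w : Finset α → ℝ)
    (hw : ∀ R, w R = ∑ s ∈ M.powerset.filter (fun s => r ⊆ s),
      (-1 : ℝ) ^ (s.card - r.card) * (if s ⊆ R then (1 : ℝ) else 0) / lam s)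
    (c : Finset α → ℝ)
    (hc : ∀ s, c s = π s * ∑ t ∈ s.powerset.filter (fun t => r ⊆ t),
      (-1 : ℝ) ^ (t.card - r.card) / lam t) :
    (∀ R ∈ Q, w R = ∑ s ∈ Q.filter (fun s => r ⊆ s),
      (if R = s then 1 / π s else 0) * c s) ∧
    (∑ s ∈ Q.filter (fun s => r ⊆ s), c s = 0) := by
  constructor
  · -- Part 1
    intro R hR
    have hRM : R ⊆ M := hQsub R hR
    have step : ∀ s ∈ Q.filter (fun s => r ⊆ s),
        (if R = s then 1 / π s else 0) * c s
        = if R = s then 1 / π s * c s else 0 := by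
      intro s _; split_ifs <;> simp
    rw [Finset.sum_congr rfl step, Finset.sum_ite_eq]
    simp only [mem_filter, hR, true_and]
    rw [hw]
    by_cases hrR : r ⊆ R
    · rw [if_pos hrR, hc]
      have hπ : π R ≠ 0 := (hpos R hR).ne'
      rw [one_div, inv_mul_eq_div, mul_comm, mul_div_assoc, div_self hπ, mul_one]
      have step2 : ∀ s ∈ M.powerset.filter (fun s => r ⊆ s),
          (-1 : ℝ) ^ (s.card - r.card) * (if s ⊆ R then (1 : ℝ) else 0) / lam s
          = if s ⊆ R then (-1 : ℝ) ^ (s.card - r.card) / lam s else 0 := by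
        intro s _; split_ifs <;> simp
      rw [Finset.sum_congr rfl step2, ← Finset.sum_filter]
      refine Finset.sum_congr ?_ (fun _ _ => rfl)
      ext t
      simp only [mem_filter, Finset.filter_filter, mem_powerset]
      exact ⟨fun ⟨_, h2, h3⟩ => ⟨h3, h2⟩, fun ⟨h3, h2⟩ => ⟨h3.trans hRM, h2, h3⟩⟩
    · rw [if_neg hrR]
      refine Finset.sum_eq_zero fun s hs => ?_
      simp only [mem_filter, mem_powerset] at hs
      have : ¬ s ⊆ R := fun h => hrR (hs.2.trans h)
      simp [this]
  · -- Part 2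
    have expand : ∀ s ∈ Q.filter (fun s => r ⊆ s), c s =
        ∑ t ∈ M.powerset.filter (fun t => r ⊆ t),
          if t ⊆ s then (-1 : ℝ) ^ (t.card - r.card) / lam t * π s else 0 := by
      intro s hs
      simp only [mem_filter] at hs
      rw [hc, Finset.mul_sum, ← Finset.sum_filter]
      refine Finset.sum_congr ?_ (fun t _ => mul_comm _ _)
      ext t
      simp only [mem_filter, Finset.filter_filter, mem_powerset]
      exact ⟨fun ⟨h1, h2⟩ => ⟨h1.trans (hQsub s hs.1), h2, h1⟩,
        fun ⟨_, h2, h3⟩ => ⟨h3, h2⟩⟩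
    rw [Finset.sum_congr rfl expand, Finset.sum_comm]
    have inner : ∀ t ∈ M.powerset.filter (fun t => r ⊆ t),
        (∑ s ∈ Q.filter (fun s => r ⊆ s),
          if t ⊆ s then (-1 : ℝ) ^ (t.card - r.card) / lam t * π s else 0)
        = (-1 : ℝ) ^ (t.card - r.card) := by
      intro t ht
      simp only [mem_filter, mem_powerset] at ht
      rw [Finset.sum_ite, Finset.sum_const_zero, add_zero, ← Finset.mul_sum]
      have hfil : (Q.filter (fun s => r ⊆ s)).filter (fun s => t ⊆ s)
          = Q.filter (fun s => t ⊆ s) := by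
        ext s
        simp only [mem_filter, Finset.filter_filter]
        exact ⟨fun ⟨h1, _, h3⟩ => ⟨h1, h3⟩, fun ⟨h1, h3⟩ => ⟨h1, ht.2.trans h3, h3⟩⟩
      rw [hfil, ← hlam t, div_mul_cancel₀]
      exact (hlampos t ht.1).ne'
    rw [Finset.sum_congr rfl inner]
    have hrsubM : r ⊆ M := hQsub r hr
    have hne : (M \ r).Nonempty := by
      rw [sdiff_nonempty]
      exact fun h => hrM (subset_antisymm hrsubM h)
    have hz := Finset.sum_powerset_neg_one_pow_card_of_nonempty (x := M \ r) hne
    have key : ∑ t ∈ M.powerset.filter (fun t => r ⊆ t),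
        ((-1 : ℝ)) ^ (t.card - r.card)
        = ∑ u ∈ (M \ r).powerset, ((-1 : ℝ)) ^ u.card := by
      refine Finset.sum_nbij' (fun t => t \ r) (fun u => u ∪ r) ?_ ?_ ?_ ?_ ?_
      · intro t ht
        simp only [mem_filter, mem_powerset] at ht ⊢
        exact sdiff_subset_sdiff ht.1 Subset.rfl
      · intro u hu
        simp only [mem_powerset] at hu
        simp only [mem_filter, mem_powerset]
        exact ⟨union_subset (hu.trans sdiff_subset) hrsubM, subset_union_right⟩
      · intro t ht
        simp only [mem_filter, mem_powerset] at ht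
        exact sdiff_union_of_subset ht.2
      · intro u hu
        simp only [mem_powerset] at hu
        have hd : Disjoint u r := disjoint_of_subset_left hu sdiff_disjoint
        show (u ∪ r) \ r = u
        rw [union_sdiff_right, sdiff_eq_self_of_disjoint hd]
      · intro t ht
        simp only [mem_filter, mem_powerset] at ht
        rw [card_sdiff_of_subset ht.2]
    rw [key]
    calc ∑ u ∈ (M \ r).powerset, ((-1 : ℝ)) ^ u.card
        = ((∑ u ∈ (M \ r).powerset, ((-1 : ℤ)) ^ u.card : ℤ) : ℝ) := by push_cast; ring
      _ = 0 := by rw [hz]; norm_num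
end

section
/- Let ψ be an integrable ℝᵈ-valued random variable with E[ψ] = 0, independent random pattern R with values in finite Q, and for each r ∈ Q, r ≠ M let 𝓕_r be integrable and α_{r,s} ∈ ℝ (for s ∈ Q, s ⊇ r) satisfy ∑_{s ⊇ r} α_{r,s} = 0. Then the adaptive estimating function Ψ = (𝟙(R=M)/π_M)ψ + ∑_{r≠M} (∑_{s⊇r} (𝟙(R=s)/π_s) α_{r,s}) 𝓕_r satisfies E[Ψ] = 0. -/
open MeasureTheory Finset

/-- Unbiasedness of the IBM(Adaptive) estimating function: if the coefficients
satisfy `∑_{s ∈ Q, s ⊇ r} α_{r,s} = 0` then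
`Ψ = 𝟙(R=M)/π_M · ψ + ∑_{r≠M} (∑_{s⊇r} 𝟙(R=s)/π_s · α_{r,s}) 𝓕_r`
has mean zero, the pattern `R` being independent of the data (product space). -/
theorem ibm_adaptive_unbiased
    {Ω : Type*} [MeasurableSpace Ω] (μ : Measure Ω) [IsProbabilityMeasure μ]
    {β : Type*} [DecidableEq β] [MeasurableSpace (Finset β)]
    [MeasurableSingletonClass (Finset β)]
    (ν : Measure (Finset β)) [IsProbabilityMeasure ν]
    (Q : Finset (Finset β)) (M : Finset β) (hM : M ∈ Q)
    (hQsub : ∀ t ∈ Q, t ⊆ M) (hν : ∀ t, t ∉ Q → ν {t} = 0)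
    (π : Finset β → ℝ) (hπ : ∀ t ∈ Q, π t = (ν {t}).toReal)
    (hpos : ∀ t ∈ Q, 0 < π t)
    {d : ℕ} (ψ : Ω → EuclideanSpace ℝ (Fin d))
    (hψint : Integrable ψ μ) (hψ : ∫ z, ψ z ∂μ = 0)
    (F : Finset β → Ω → EuclideanSpace ℝ (Fin d))
    (hF : ∀ r ∈ Q.erase M, Integrable (F r) μ)
    (a : Finset β → Finset β → ℝ)
    (ha : ∀ r ∈ Q.erase M, ∑ s ∈ Q.filter (fun s => r ⊆ s), a r s = 0) :
    ∫ p : Ω × Finset β,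
      ((if p.2 = M then 1 / π M else 0) • ψ p.1 +
        ∑ r ∈ Q.erase M,
          (∑ s ∈ Q.filter (fun s => r ⊆ s),
            (if p.2 = s then 1 / π s else 0) * a r s) • F r p.1) ∂(μ.prod ν)
      = 0 := by
  -- indicator functions of singletons
  have hind : ∀ s : Finset β, (fun t : Finset β => if t = s then 1 / π s else 0)
      = Set.indicator {s} (fun _ => 1 / π s) := by
    intro s
    funext t
    simp [Set.indicator_apply]
  have hgint : ∀ s : Finset β,
      Integrable (fun t : Finset β => if t = s then 1 / π s else 0) ν := by
    intro s
    rw [hind s]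
    exact (integrable_indicator_iff (measurableSet_singleton s)).2
      (integrableOn_const (measure_ne_top ν _))
  have hgval : ∀ s : Finset β,
      (∫ t, (if t = s then 1 / π s else 0) ∂ν) = (ν {s}).toReal * (1 / π s) := by
    intro s
    rw [hind s, integral_indicator_const _ (measurableSet_singleton s)]
    simp [mul_comm, measureReal_def]
  -- product integrability and Fubini for `g p.2 • h p.1`
  have key : ∀ (g : Finset β → ℝ), Integrable g ν →
      ∀ (h : Ω → EuclideanSpace ℝ (Fin d)), Integrable h μ →
      Integrable (fun p : Ω × Finset β => g p.2 • h p.1) (μ.prod ν) := by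
    intro g hg h hh
    exact (hg.smul_prod hh).swap
  have keyI : ∀ (g : Finset β → ℝ) (h : Ω → EuclideanSpace ℝ (Fin d)),
      ∫ p : Ω × Finset β, g p.2 • h p.1 ∂(μ.prod ν) = (∫ t, g t ∂ν) • ∫ z, h z ∂μ := by
    intro g h
    rw [← integral_prod_swap (fun p : Ω × Finset β => g p.2 • h p.1)]
    exact integral_prod_smul g h
  -- integrability of the pieces
  have hA : Integrable
      (fun p : Ω × Finset β => (if p.2 = M then 1 / π M else 0) • ψ p.1) (μ.prod ν) :=
    key _ (hgint M) _ hψint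
  have hcr : ∀ s : Finset β, ∀ c : ℝ,
      Integrable (fun t : Finset β => (if t = s then 1 / π s else 0) * c) ν := by
    intro s c
    exact (hgint s).mul_const c
  have hBint : ∀ r ∈ Q.erase M, Integrable
      (fun p : Ω × Finset β =>
        (∑ s ∈ Q.filter (fun s => r ⊆ s),
          (if p.2 = s then 1 / π s else 0) * a r s) • F r p.1) (μ.prod ν) := by
    intro r hr
    exact key _ (integrable_finset_sum _ fun s _ => hcr s (a r s)) _ (hF r hr)
  rw [integral_add hA (integrable_finset_sum _ hBint),
    integral_finset_sum _ hBint,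
    keyI (fun t : Finset β => if t = M then 1 / π M else 0) ψ, hψ, smul_zero]
  have hzero : ∀ r ∈ Q.erase M,
      ∫ p : Ω × Finset β,
        (∑ s ∈ Q.filter (fun s => r ⊆ s),
          (if p.2 = s then 1 / π s else 0) * a r s) • F r p.1 ∂(μ.prod ν) = 0 := by
    intro r hr
    rw [keyI (fun t : Finset β => ∑ s ∈ Q.filter (fun s => r ⊆ s),
      (if t = s then 1 / π s else 0) * a r s) (F r)]
    have : (∫ t, (∑ s ∈ Q.filter (fun s => r ⊆ s),
        (if t = s then 1 / π s else 0) * a r s) ∂ν) = 0 := by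
      rw [integral_finset_sum _ fun s _ => hcr s (a r s)]
      have : ∀ s ∈ Q.filter (fun s => r ⊆ s),
          (∫ t, (if t = s then 1 / π s else 0) * a r s ∂ν) = a r s := by
        intro s hs
        have hsQ : s ∈ Q := (mem_filter.1 hs).1
        rw [integral_mul_const, hgval s, ← hπ s hsQ]
        field_simp [(hpos s hsQ).ne']
      rw [Finset.sum_congr rfl this]
      exact ha r hr
    rw [this, zero_smul]
  rw [Finset.sum_congr rfl hzero]
  simp
end

section
/- Let ψ, f₁, …, f_k be square-integrable centered ℝ-valued random variables and R an independent pattern variable with values in finite Q and full pattern M, π_t > 0. For coefficients satisfying ∑_{s⊇r} α_{r,s} = 0, the variance of the adaptive estimating function Ψ = (𝟙(R=M)/π_M)ψ + ∑_{r≠M}(∑_{s⊇r}(𝟙(R=s)/π_s)α_{r,s})f_r decomposes as Var(Ψ) = Var(ψ)/π_M + ∑_{r≠M}(2α_{r,M}/π_M)Cov(ψ, f_r) + ∑_{s∈Q, s≠M}(1/π_s)Var(∑_{r⊆s, r≠M} α_{r,s} f_r) + (1/π_M)Var(∑_{r≠M} α_{r,M} f_r). -/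
open MeasureTheory Finset

/-- Variance of a real-valued functional. -/
noncomputable def rvVar {Ω : Type*} [MeasurableSpace Ω] (μ : Measure Ω)
    (g : Ω → ℝ) : ℝ :=
  (∫ x, g x ^ 2 ∂μ) - (∫ x, g x ∂μ) ^ 2

/-- Covariance of two real-valued functionals. -/
noncomputable def rvCov {Ω : Type*} [MeasurableSpace Ω] (μ : Measure Ω)
    (g h : Ω → ℝ) : ℝ :=
  (∫ x, g x * h x ∂μ) - (∫ x, g x ∂μ) * (∫ x, h x ∂μ)

/-- Variance decomposition of the adaptive IBM estimating function (scalar version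
of Theorem 3): for centered square-integrable `ψ, f_r`, independent pattern `R`
(product space), and coefficients satisfying the constraint `∑_{s ⊇ r} α_{r,s} = 0`,
`Var(Ψ) = Var(ψ)/π_M + ∑_{r≠M}(2α_{r,M}/π_M)Cov(ψ, f_r)
+ ∑_{s≠M}(1/π_s)Var(∑_{r⊆s, r≠M} α_{r,s} f_r) + (1/π_M)Var(∑_{r≠M} α_{r,M} f_r)`. -/
theorem ibm_adaptive_variance_decomposition
    {Ω : Type*} [MeasurableSpace Ω] (μ : Measure Ω) [IsProbabilityMeasure μ]
    {β : Type*} [DecidableEq β] [MeasurableSpace (Finset β)]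
    [MeasurableSingletonClass (Finset β)]
    (ν : Measure (Finset β)) [IsProbabilityMeasure ν]
    (Q : Finset (Finset β)) (M : Finset β) (hM : M ∈ Q)
    (hQsub : ∀ t ∈ Q, t ⊆ M) (hν : ∀ t, t ∉ Q → ν {t} = 0)
    (π : Finset β → ℝ) (hπ : ∀ t ∈ Q, π t = (ν {t}).toReal)
    (hpos : ∀ t ∈ Q, 0 < π t)
    (ψ : Ω → ℝ) (hψ2 : MemLp ψ 2 μ) (hψ0 : ∫ z, ψ z ∂μ = 0)
    (f : Finset β → Ω → ℝ) (hf2 : ∀ r ∈ Q.erase M, MemLp (f r) 2 μ)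
    (hf0 : ∀ r ∈ Q.erase M, ∫ z, f r z ∂μ = 0)
    (a : Finset β → Finset β → ℝ)
    (ha : ∀ r ∈ Q.erase M, ∑ s ∈ Q.filter (fun s => r ⊆ s), a r s = 0) :
    rvVar (μ.prod ν)
      (fun p =>
        (if p.2 = M then 1 / π M else 0) * ψ p.1 +
        ∑ r ∈ Q.erase M,
          (∑ s ∈ Q.filter (fun s => r ⊆ s),
            (if p.2 = s then 1 / π s else 0) * a r s) * f r p.1)
      = rvVar μ ψ / π M
        + ∑ r ∈ Q.erase M, (2 * a r M / π M) * rvCov μ ψ (f r)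
        + ∑ s ∈ Q.erase M, (1 / π s) *
            rvVar μ (fun x => ∑ r ∈ (Q.erase M).filter (fun r => r ⊆ s), a r s * f r x)
        + (1 / π M) * rvVar μ (fun x => ∑ r ∈ Q.erase M, a r M * f r x) := by
  
  have one_le_two' : (1 : ENNReal) ≤ 2 := one_le_two
  have hmul : ∀ {u v : Ω → ℝ}, MemLp u 2 μ → MemLp v 2 μ →
      Integrable (fun x => u x * v x) μ := by
    intro u v hu hv
    have h12 : (1 : ENNReal) / 1 = 1 / 2 + 1 / 2 := by
      simp [ENNReal.inv_two_add_inv_two]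
    simpa [smul_eq_mul, Pi.mul_def] using (hv.smul (r := 1) hu).integrable le_rfl
  have hsq : ∀ {u : Ω → ℝ}, MemLp u 2 μ → Integrable (fun x => u x ^ 2) μ := by
    intro u hu
    simpa [pow_two] using hmul hu hu
  set eM := Q.erase M with heM
  have hf2' : ∀ r ∈ eM, MemLp (f r) 2 μ := hf2
  have hf0' : ∀ r ∈ eM, ∫ z, f r z ∂μ = 0 := hf0
  have hfMeq : eM.filter (fun r => r ⊆ M) = eM :=
    Finset.filter_true_of_mem fun r hr => hQsub r (Finset.mem_of_mem_erase hr)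
  set g : Finset β → Ω → ℝ :=
    fun s x => (if s = M then ψ x else 0) +
      ∑ r ∈ eM.filter (fun r => r ⊆ s), a r s * f r x with hgdef
  have hhs2 : ∀ s, MemLp (fun x => ∑ r ∈ eM.filter (fun r => r ⊆ s), a r s * f r x) 2 μ :=
    fun s => memLp_finset_sum _ fun r hr =>
      (hf2' r (Finset.mem_of_mem_filter r hr)).const_mul _
  have hhs0 : ∀ s, ∫ x, (∑ r ∈ eM.filter (fun r => r ⊆ s), a r s * f r x) ∂μ = 0 := by
    intro s
    rw [integral_finset_sum _ fun r hr =>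
      ((hf2' r (Finset.mem_of_mem_filter r hr)).const_mul (a r s)).integrable one_le_two']
    refine Finset.sum_eq_zero fun r hr => ?_
    rw [integral_const_mul, hf0' r (Finset.mem_of_mem_filter r hr), mul_zero]
  have hg2 : ∀ s, MemLp (g s) 2 μ := by
    intro s
    by_cases hs : s = M
    · simp only [hgdef, hs, if_pos rfl, if_true, eq_self_iff_true]
      exact hψ2.add (hhs2 M)
    · simp only [hgdef, if_neg hs, zero_add]
      exact hhs2 s
  have hg0 : ∀ s, ∫ x, g s x ∂μ = 0 := by
    intro s
    by_cases hs : s = M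
    · simp only [hgdef, hs, if_pos rfl, if_true, eq_self_iff_true]
      rw [integral_add (hψ2.integrable one_le_two') ((hhs2 M).integrable one_le_two'),
        hψ0, hhs0 M, add_zero]
    · simp only [hgdef, if_neg hs, zero_add]
      exact hhs0 s
  have hIndEq : ∀ (c : ℝ) (s : Finset β),
      (fun t : Finset β => if t = s then c else 0) = Set.indicator {s} (fun _ => c) := by
    intro c s; funext t; simp [Set.indicator_apply]
  have hIndInt : ∀ (c : ℝ) (s : Finset β),
      Integrable (fun t : Finset β => if t = s then c else 0) ν := by
    intro c s; rw [hIndEq]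
    exact (integrable_const c).indicator (measurableSet_singleton s)
  have hInd : ∀ (c : ℝ) (s : Finset β),
      ∫ t, (if t = s then c else 0) ∂ν = (ν {s}).toReal * c := by
    intro c s; rw [hIndEq, integral_indicator_const c (measurableSet_singleton s), smul_eq_mul, measureReal_def]
  have key : ∀ p : Ω × Finset β,
      (if p.2 = M then 1 / π M else 0) * ψ p.1 +
        ∑ r ∈ eM, (∑ s ∈ Q.filter (fun s => r ⊆ s),
          (if p.2 = s then 1 / π s else 0) * a r s) * f r p.1
      = ∑ s ∈ Q, g s p.1 * (if p.2 = s then 1 / π s else 0) := by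
    intro p
    have h1 : ∑ s ∈ Q, (if s = M then ψ p.1 else 0) * (if p.2 = s then 1 / π s else 0)
        = (if p.2 = M then 1 / π M else 0) * ψ p.1 := by
      rw [Finset.sum_eq_single M (fun s _ hsM => by simp [hsM]) (fun hM' => absurd hM hM')]
      simp [mul_comm]
    have h2 : ∑ s ∈ Q, (∑ r ∈ eM.filter (fun r => r ⊆ s), a r s * f r p.1) *
          (if p.2 = s then 1 / π s else 0)
        = ∑ r ∈ eM, (∑ s ∈ Q.filter (fun s => r ⊆ s),
            (if p.2 = s then 1 / π s else 0) * a r s) * f r p.1 := by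
      simp only [Finset.sum_mul]
      rw [Finset.sum_comm' (s := Q) (t := fun s => eM.filter (fun r => r ⊆ s))
        (t' := eM) (s' := fun r => Q.filter (fun s => r ⊆ s))
        (by intro s r; simp only [Finset.mem_filter]; tauto)]
      exact Finset.sum_congr rfl fun r _ => Finset.sum_congr rfl fun s _ => by ring
    simp only [hgdef, add_mul, Finset.sum_add_distrib, h1, h2]
  have keysq : ∀ p : Ω × Finset β,
      ((if p.2 = M then 1 / π M else 0) * ψ p.1 +
        ∑ r ∈ eM, (∑ s ∈ Q.filter (fun s => r ⊆ s),
          (if p.2 = s then 1 / π s else 0) * a r s) * f r p.1) ^ 2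
      = ∑ s ∈ Q, g s p.1 ^ 2 * (if p.2 = s then (1 / π s) ^ 2 else 0) := by
    intro p
    rw [key p]
    have A : ∑ s ∈ Q, g s p.1 * (if p.2 = s then 1 / π s else 0)
        = if p.2 ∈ Q then g p.2 p.1 * (1 / π p.2) else 0 := by
      simp only [mul_ite, mul_zero]
      exact Finset.sum_ite_eq Q p.2 fun s => g s p.1 * (1 / π s)
    have B : ∑ s ∈ Q, g s p.1 ^ 2 * (if p.2 = s then (1 / π s) ^ 2 else 0)
        = if p.2 ∈ Q then g p.2 p.1 ^ 2 * (1 / π p.2) ^ 2 else 0 := by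
      simp only [mul_ite, mul_zero]
      exact Finset.sum_ite_eq Q p.2 fun s => g s p.1 ^ 2 * (1 / π s) ^ 2
    rw [A, B]
    split_ifs with hmem
    · ring
    · simp
  simp only [rvVar, rvCov]
  simp only [keysq]
  simp only [key]
  rw [integral_finset_sum _ fun s _ => (hsq (hg2 s)).mul_prod (hIndInt ((1 / π s) ^ 2) s)]
  rw [integral_finset_sum _ fun s _ => ((hg2 s).integrable one_le_two').mul_prod
    (hIndInt (1 / π s) s)]
  have hsum1 : ∑ s ∈ Q, ∫ p : Ω × Finset β,
      g s p.1 * (if p.2 = s then 1 / π s else 0) ∂(μ.prod ν) = 0 := by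
    refine Finset.sum_eq_zero fun s _ => ?_
    rw [integral_prod_mul (g s) (fun t : Finset β => if t = s then 1 / π s else 0), hg0 s, zero_mul]
  have hsum2 : ∑ s ∈ Q, ∫ p : Ω × Finset β,
      g s p.1 ^ 2 * (if p.2 = s then (1 / π s) ^ 2 else 0) ∂(μ.prod ν)
      = ∑ s ∈ Q, (∫ x, g s x ^ 2 ∂μ) * (1 / π s) := by
    refine Finset.sum_congr rfl fun s hs => ?_
    rw [integral_prod_mul (fun x => g s x ^ 2) (fun t : Finset β => if t = s then (1 / π s) ^ 2 else 0), hInd, ← hπ s hs]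
    have hne : π s ≠ 0 := (hpos s hs).ne'
    rw [show π s * (1 / π s) ^ 2 = 1 / π s from by field_simp]
  rw [hsum1, hsum2]
  rw [← Finset.sum_erase_add Q _ hM, ← heM]
  -- evaluate the pattern-M term
  have hgM2 : ∫ x, g M x ^ 2 ∂μ
      = (∫ x, ψ x ^ 2 ∂μ) + 2 * (∑ r ∈ eM, a r M * ∫ x, ψ x * f r x ∂μ)
        + ∫ x, (∑ r ∈ eM, a r M * f r x) ^ 2 ∂μ := by
    have hS2 : MemLp (fun x => ∑ r ∈ eM, a r M * f r x) 2 μ :=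
      memLp_finset_sum _ fun r hr => (hf2' r hr).const_mul _
    have hgMx : ∀ x, g M x ^ 2
        = ψ x ^ 2 + 2 * (ψ x * ∑ r ∈ eM, a r M * f r x)
          + (∑ r ∈ eM, a r M * f r x) ^ 2 := by
      intro x
      simp only [hgdef, if_pos rfl, if_true, eq_self_iff_true, hfMeq]
      ring
    simp only [hgMx]
    have hI1 : Integrable (fun x => ψ x ^ 2 + 2 * (ψ x * ∑ r ∈ eM, a r M * f r x)) μ :=
      (hsq hψ2).add ((hmul hψ2 hS2).const_mul 2)
    rw [integral_add hI1 (hsq hS2),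
      integral_add (hsq hψ2) ((hmul hψ2 hS2).const_mul 2), integral_const_mul]
    have hps : (fun x => ψ x * ∑ r ∈ eM, a r M * f r x)
        = fun x => ∑ r ∈ eM, a r M * (ψ x * f r x) := by
      funext x
      rw [Finset.mul_sum]
      exact Finset.sum_congr rfl fun r _ => by ring
    rw [hps, integral_finset_sum _ fun r hr => (hmul hψ2 (hf2' r hr)).const_mul _]
    simp only [integral_const_mul]
  rw [hgM2]
  -- simplify the right-hand side
  have hS0 : ∫ x, (∑ r ∈ eM, a r M * f r x) ∂μ = 0 := by
    rw [integral_finset_sum _ fun r hr => ((hf2' r hr).const_mul _).integrable one_le_two']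
    refine Finset.sum_eq_zero fun r hr => ?_
    rw [integral_const_mul, hf0' r hr, mul_zero]
  have hCov : ∑ r ∈ eM, 2 * a r M / π M *
        ((∫ x, ψ x * f r x ∂μ) - (∫ x, ψ x ∂μ) * ∫ x, f r x ∂μ)
      = ∑ r ∈ eM, 1 / π M * (2 * (a r M * ∫ x, ψ x * f r x ∂μ)) := by
    refine Finset.sum_congr rfl fun r hr => ?_
    rw [hψ0, zero_mul, sub_zero]
    ring
  have hVar : ∑ s ∈ eM, 1 / π s *
        ((∫ x, (∑ r ∈ eM.filter (fun r => r ⊆ s), a r s * f r x) ^ 2 ∂μ)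
          - (∫ x, (∑ r ∈ eM.filter (fun r => r ⊆ s), a r s * f r x) ∂μ) ^ 2)
      = ∑ s ∈ eM, (∫ x, g s x ^ 2 ∂μ) * (1 / π s) := by
    refine Finset.sum_congr rfl fun s hs => ?_
    have hgse : g s = fun x => ∑ r ∈ eM.filter (fun r => r ⊆ s), a r s * f r x := by
      funext x
      simp only [hgdef, if_neg (Finset.ne_of_mem_erase hs), zero_add]
    rw [hgse, hhs0 s]
    ring
  rw [hCov, hVar, hψ0, hS0, ← Finset.mul_sum, ← Finset.mul_sum]
  ring
end
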